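/- Let ρ_A be a 2×2 density matrix with non-negative real entries whose diagonal entries P_↑ = (ρ_A)_{0,0} and P_↓ = (ρ_A)_{1,1} are both nonzero, and let d_C be given. If the pair (d_C, t) with t = (ρ_A)_{0,1}/√(P_↑·P_↓) is feasible, then there exist a dimension d_B and a non-negative tripartite pure state ψ on systems A, B, C with local dimensions 2, d_B, d_C such that the reduced density matrix of ψ on A equals ρ_A, ρ_AC = ρ_A ⊗ ρ_C, and ρ_A(j) = ρ_A for every measurement outcome j on B with P_j > 0. -/

import Mathlib

open scoped BigOperators Kronecker
open scoped Classical ComplexOrder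

noncomputable def rhoA {dA dB dC : ℕ} (ψ : Fin dA × Fin dB × Fin dC → ℂ) :
    Matrix (Fin dA) (Fin dA) ℂ :=
  Matrix.of fun i i' => ∑ j : Fin dB, ∑ k : Fin dC,
    ψ (i, j, k) * (starRingEnd ℂ) (ψ (i', j, k))

noncomputable def rhoC {dA dB dC : ℕ} (ψ : Fin dA × Fin dB × Fin dC → ℂ) :
    Matrix (Fin dC) (Fin dC) ℂ :=
  Matrix.of fun k k' => ∑ i : Fin dA, ∑ j : Fin dB,
    ψ (i, j, k) * (starRingEnd ℂ) (ψ (i, j, k'))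

noncomputable def rhoAC {dA dB dC : ℕ} (ψ : Fin dA × Fin dB × Fin dC → ℂ) :
    Matrix (Fin dA × Fin dC) (Fin dA × Fin dC) ℂ :=
  Matrix.of fun p q => ∑ j : Fin dB, ψ (p.1, j, p.2) * (starRingEnd ℂ) (ψ (q.1, j, q.2))

noncomputable def probB {dA dB dC : ℕ} (ψ : Fin dA × Fin dB × Fin dC → ℂ) (j : Fin dB) : ℝ :=
  ∑ i : Fin dA, ∑ k : Fin dC, Complex.normSq (ψ (i, j, k))

noncomputable def rhoAPost {dA dB dC : ℕ} (ψ : Fin dA × Fin dB × Fin dC → ℂ) (j : Fin dB) :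
    Matrix (Fin dA) (Fin dA) ℂ :=
  Matrix.of fun i i' => (probB ψ j : ℂ)⁻¹ *
    ∑ k : Fin dC, ψ (i, j, k) * (starRingEnd ℂ) (ψ (i', j, k))

def Normalized {dA dB dC : ℕ} (ψ : Fin dA × Fin dB × Fin dC → ℂ) : Prop :=
  ∑ i : Fin dA, ∑ j : Fin dB, ∑ k : Fin dC, Complex.normSq (ψ (i, j, k)) = 1

def NonNeg {dA dB dC : ℕ} (ψ : Fin dA × Fin dB × Fin dC → ℂ) : Prop :=
  ∀ x, 0 ≤ (ψ x).re ∧ (ψ x).im = 0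

/-- The pair `(d, t)` is feasible: there are entrywise non-negative unit vectors `v, w ∈ ℝ^d`
with inner product `t` and `2·|v|₁·|w|₁ ≤ t·(|v|₁² + |w|₁²)`. -/
def Feasible (d : ℕ) (t : ℝ) : Prop :=
  ∃ v w : Fin d → ℝ,
    (∀ k, 0 ≤ v k) ∧ (∀ k, 0 ≤ w k) ∧
    (∑ k, v k ^ 2) = 1 ∧ (∑ k, w k ^ 2) = 1 ∧
    (∑ k, v k * w k) = t ∧
    2 * (∑ k, |v k|) * (∑ k, |w k|) ≤ t * ((∑ k, |v k|) ^ 2 + (∑ k, |w k|) ^ 2)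

lemma perm_sum_reindex {n : ℕ} (F : Equiv.Perm (Fin n) → ℝ) (ρ : Equiv.Perm (Fin n)) :
    ∑ π : Equiv.Perm (Fin n), F (π * ρ) = ∑ π : Equiv.Perm (Fin n), F π :=
  Fintype.sum_bijective (· * ρ) (Group.mulRight_bijective ρ) _ _ (fun _ => rfl)

lemma perm_sum_diag {n : ℕ} (f g : Fin n → ℝ) (k : Fin n) :
    ∑ π : Equiv.Perm (Fin n), f (π k) * g (π k)
      = (n - 1).factorial * ∑ m, f m * g m := by
  have hconst : ∀ j : Fin n, (∑ π : Equiv.Perm (Fin n), f (π j) * g (π j))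
      = ∑ π : Equiv.Perm (Fin n), f (π k) * g (π k) := by
    intro j
    have h := perm_sum_reindex (fun π => f (π k) * g (π k)) (Equiv.swap k j)
    simpa [Equiv.Perm.mul_apply, Equiv.swap_apply_left] using h
  have hn : 0 < n := k.pos
  have h1 : (n : ℝ) * (∑ π : Equiv.Perm (Fin n), f (π k) * g (π k))
      = ∑ j : Fin n, ∑ π : Equiv.Perm (Fin n), f (π j) * g (π j) := by
    rw [Finset.sum_congr rfl (fun j _ => hconst j)]
    simp [Finset.sum_const, Finset.card_univ]
  have h2 : ∑ j : Fin n, ∑ π : Equiv.Perm (Fin n), f (π j) * g (π j)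
      = (n.factorial : ℝ) * ∑ m, f m * g m := by
    rw [Finset.sum_comm]
    rw [Finset.sum_congr rfl (fun (π : Equiv.Perm (Fin n)) _ =>
      Equiv.sum_comp π (fun m => f m * g m))]
    simp [Finset.sum_const, Finset.card_univ, Fintype.card_perm]
  have hfact : (n : ℝ) * (n - 1).factorial = n.factorial := by
    rw_mod_cast [Nat.mul_factorial_pred hn.ne']
  have hme := h1.trans h2
  have hne : (n : ℝ) ≠ 0 := by positivity
  apply mul_left_cancel₀ hne
  rw [← mul_assoc, hfact]
  exact hme

lemma perm_sum_offdiag {n : ℕ} (f g : Fin n → ℝ) {k k' : Fin n} (hkk : k ≠ k') :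
    ∑ π : Equiv.Perm (Fin n), f (π k) * g (π k')
      = (n - 2).factorial * ((∑ m, f m) * (∑ m, g m) - ∑ m, f m * g m) := by
  have hconst : ∀ j j' : Fin n, j ≠ j' →
      (∑ π : Equiv.Perm (Fin n), f (π j) * g (π j'))
        = ∑ π : Equiv.Perm (Fin n), f (π k) * g (π k') := by
    intro j j' hjj
    set σ := Equiv.swap k j with hσ
    set c := σ k' with hc
    set τ := Equiv.swap c j' with hτ
    have hck : c ≠ j := by
      simp only [hc]
      intro hcj
      exact hkk (σ.injective (by rw [hcj, hσ, Equiv.swap_apply_left])).symm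
    have hρk : (τ * σ) k = j := by
      simp only [Equiv.Perm.mul_apply, hσ, Equiv.swap_apply_left]
      exact Equiv.swap_apply_of_ne_of_ne (Ne.symm hck) hjj
    have hρk' : (τ * σ) k' = j' := by
      simp only [Equiv.Perm.mul_apply, ← hc, hτ, Equiv.swap_apply_left]
    have h := perm_sum_reindex (fun π => f (π k) * g (π k')) (τ * σ)
    calc ∑ π : Equiv.Perm (Fin n), f (π j) * g (π j')
        = ∑ π : Equiv.Perm (Fin n), f ((π * (τ * σ)) k) * g ((π * (τ * σ)) k') := by
          simp [Equiv.Perm.mul_apply, hρk, hρk']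
      _ = _ := h
  have hn2 : 2 ≤ n := by
    have : Nontrivial (Fin n) := ⟨⟨k, k', hkk⟩⟩
    exact (by simpa using Fintype.one_lt_card_iff_nontrivial.2 this : 1 < n)
  set V := ∑ π : Equiv.Perm (Fin n), f (π k) * g (π k') with hV
  have hsplit : ∀ j : Fin n, ∑ j' : Fin n, ∑ π : Equiv.Perm (Fin n), f (π j) * g (π j')
      = (n - 1).factorial * (∑ m, f m * g m) + ((n : ℝ) - 1) * V := by
    intro j
    rw [← Finset.add_sum_erase _ _ (Finset.mem_univ j), perm_sum_diag]
    congr 1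
    rw [Finset.sum_congr rfl (fun j' hj' => hconst j j'
      (Ne.symm (Finset.ne_of_mem_erase hj')))]
    rw [Finset.sum_const, Finset.card_erase_of_mem (Finset.mem_univ j)]
    simp [Finset.card_univ, nsmul_eq_mul]
    left
    have : (1:ℝ) ≤ (n:ℝ) := by exact_mod_cast Nat.one_le_of_lt hn2
    push_cast [Nat.cast_sub (Nat.one_le_of_lt hn2)]
    ring
  have htot : ∑ j : Fin n, ∑ j' : Fin n, ∑ π : Equiv.Perm (Fin n), f (π j) * g (π j')
      = (n.factorial : ℝ) * ((∑ m, f m) * (∑ m, g m)) := by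
    have e1 : ∑ j : Fin n, ∑ j' : Fin n, ∑ π : Equiv.Perm (Fin n), f (π j) * g (π j')
        = ∑ π : Equiv.Perm (Fin n), ∑ j : Fin n, ∑ j' : Fin n, f (π j) * g (π j') := by
      rw [Finset.sum_congr rfl (fun j _ => Finset.sum_comm), Finset.sum_comm]
    rw [e1]
    have e2 : ∀ π : Equiv.Perm (Fin n), ∑ j : Fin n, ∑ j' : Fin n, f (π j) * g (π j')
        = (∑ m, f m) * (∑ m, g m) := by
      intro π
      rw [← Finset.sum_mul_sum]
      rw [Equiv.sum_comp π f, Equiv.sum_comp π g]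
    rw [Finset.sum_congr rfl (fun π _ => e2 π), Finset.sum_const, Finset.card_univ,
      Fintype.card_perm, nsmul_eq_mul, Fintype.card_fin]
  have hn0 : 0 < n := by omega
  have hn1 : 0 < n - 1 := by omega
  have hfactN : n * ((n - 1) * (n - 2).factorial) = n.factorial := by
    have h2 : (n - 1) * (n - 1 - 1).factorial = (n - 1).factorial :=
      Nat.mul_factorial_pred hn1.ne'
    have h3 : n * (n - 1).factorial = n.factorial := Nat.mul_factorial_pred hn0.ne'
    have : n - 1 - 1 = n - 2 := by omega
    rw [this] at h2
    rw [h2, h3]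
  have hcomb : (n : ℝ) * ((n : ℝ) - 1) * V
      = (n.factorial : ℝ) * ((∑ m, f m) * (∑ m, g m) - ∑ m, f m * g m) := by
    have := (Finset.sum_congr rfl (fun j (_ : j ∈ Finset.univ) => hsplit j)).symm.trans htot
    rw [Finset.sum_const, Finset.card_univ, Fintype.card_fin, nsmul_eq_mul] at this
    have h3 : (n : ℝ) * (n - 1).factorial = n.factorial := by
      rw_mod_cast [Nat.mul_factorial_pred hn0.ne']
    linear_combination this - (∑ m, f m * g m) * h3
  have hcast : ((n : ℝ) * ((n : ℝ) - 1)) * ((n - 2).factorial : ℝ) = (n.factorial : ℝ) := by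
    have h1 : ((n:ℝ) - 1) = ((n - 1 : ℕ) : ℝ) := by
      push_cast [Nat.cast_sub (by omega : 1 ≤ n)]; ring
    rw [h1]
    rw_mod_cast [← hfactN]
    ring
  have hne : ((n : ℝ) * ((n : ℝ) - 1)) ≠ 0 := by
    have : (2:ℝ) ≤ (n:ℝ) := by exact_mod_cast hn2
    nlinarith
  apply mul_left_cancel₀ hne
  rw [← mul_assoc, hcast]
  exact hcomb

lemma sum_offdiag {n : ℕ} (f : Fin n → Fin n → ℝ) :
    ∑ p : Fin n × Fin n, (if p.1 = p.2 then 0 else f p.1 p.2)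
      = (∑ a, ∑ b, f a b) - ∑ a, f a a := by
  rw [Fintype.sum_prod_type, ← Finset.sum_sub_distrib]
  refine Finset.sum_congr rfl fun a _ => ?_
  have h : ∀ b, (if a = b then (0:ℝ) else f a b) = f a b - (if a = b then f a b else 0) := by
    intro b; by_cases h : a = b <;> simp [h]
  rw [Finset.sum_congr rfl fun b _ => h b, Finset.sum_sub_distrib, Finset.sum_ite_eq,
    if_pos (Finset.mem_univ a)]

noncomputable def Xrow {n : ℕ} (γ η : ℝ) (p : Fin n × Fin n) (m : Fin n) : ℝ :=
  if p.1 = p.2 then 0 else γ * (if m = p.1 then 1 else 0) + η * (if m = p.2 then 1 else 0)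

lemma Xrow_swap_guard {n : ℕ} (γ η : ℝ) (p : Fin n × Fin n) (m : Fin n) :
    Xrow γ η p.swap m
      = if p.1 = p.2 then 0 else γ * (if m = p.2 then 1 else 0) + η * (if m = p.1 then 1 else 0) := by
  unfold Xrow
  rcases p with ⟨a, b⟩
  by_cases h : a = b <;> simp [Prod.swap, h, eq_comm] <;> try rw [if_neg (Ne.symm h)]

lemma rowXX {n : ℕ} (γ η : ℝ) (p : Fin n × Fin n) :
    ∑ m, Xrow γ η p m * Xrow γ η p m = if p.1 = p.2 then 0 else γ^2 + η^2 := by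
  rcases p with ⟨a, b⟩
  by_cases h : a = b
  · simp [Xrow, h]
  · simp only [Xrow, if_neg h]
    simp only [mul_ite, ite_mul, mul_zero, zero_mul, mul_one, one_mul, mul_add, add_mul,
      Finset.sum_add_distrib, Finset.sum_ite_eq, Finset.sum_ite_eq', Finset.mem_univ, if_true,
      Finset.sum_ite_irrel, Finset.sum_const_zero, h, Ne.symm h, if_false]
    ring
lemma rowXY {n : ℕ} (γ η : ℝ) (p : Fin n × Fin n) :
    ∑ m, Xrow γ η p m * Xrow γ η p.swap m = if p.1 = p.2 then 0 else 2*(γ*η) := by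
  rcases p with ⟨a, b⟩
  by_cases h : a = b
  · simp [Xrow, h]
  · simp only [Xrow, Prod.fst_swap, Prod.snd_swap, if_neg h, if_neg (Ne.symm h)]
    simp only [mul_ite, ite_mul, mul_zero, zero_mul, mul_one, one_mul, mul_add, add_mul,
      Finset.sum_add_distrib, Finset.sum_ite_eq, Finset.sum_ite_eq', Finset.mem_univ, if_true,
      Finset.sum_ite_irrel, Finset.sum_const_zero, h, Ne.symm h, if_false]
    ring

lemma gXX {n : ℕ} (γ η : ℝ) (k k' : Fin n) :
    ∑ p : Fin n × Fin n, Xrow γ η p k * Xrow γ η p k'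
      = if k = k' then ((n:ℝ)-1)*(γ^2 + η^2) else 2*(γ*η) := by
  have hrw : ∀ p : Fin n × Fin n, Xrow γ η p k * Xrow γ η p k'
      = (if p.1 = p.2 then 0 else
        (γ * (if k = p.1 then (1:ℝ) else 0) + η * (if k = p.2 then 1 else 0))
      * (γ * (if k' = p.1 then (1:ℝ) else 0) + η * (if k' = p.2 then 1 else 0))) := by
    intro p
    unfold Xrow
    by_cases h : p.1 = p.2 <;> simp [h, eq_comm]
  rw [Finset.sum_congr rfl fun p _ => hrw p]
  rw [sum_offdiag (fun a b =>
        (γ * (if k = a then (1:ℝ) else 0) + η * (if k = b then 1 else 0))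
      * (γ * (if k' = a then (1:ℝ) else 0) + η * (if k' = b then 1 else 0)))]
  by_cases hkk : k = k'
  · subst hkk
    simp only [mul_ite, ite_mul, mul_zero, zero_mul, mul_one, one_mul, mul_add, add_mul,
      Finset.sum_add_distrib, Finset.sum_ite_eq, Finset.sum_ite_eq', Finset.mem_univ, if_true,
      Finset.sum_ite_irrel, Finset.sum_const_zero, Finset.sum_const, Finset.card_univ,
      Fintype.card_fin, nsmul_eq_mul, smul_eq_mul, if_pos]
    ring
  · simp only [mul_ite, ite_mul, mul_zero, zero_mul, mul_one, one_mul, mul_add, add_mul,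
      Finset.sum_add_distrib, Finset.sum_ite_eq, Finset.sum_ite_eq', Finset.mem_univ, if_true,
      Finset.sum_ite_irrel, Finset.sum_const_zero, Finset.sum_const, Finset.card_univ,
      Fintype.card_fin, nsmul_eq_mul, smul_eq_mul, hkk, Ne.symm hkk, if_false]
    ring

lemma gXY {n : ℕ} (γ η : ℝ) (k k' : Fin n) :
    ∑ p : Fin n × Fin n, Xrow γ η p k * Xrow γ η p.swap k'
      = if k = k' then ((n:ℝ)-1)*(2*(γ*η)) else γ^2 + η^2 := by
  have hrw : ∀ p : Fin n × Fin n, Xrow γ η p k * Xrow γ η p.swap k'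
      = (if p.1 = p.2 then 0 else
        (γ * (if k = p.1 then (1:ℝ) else 0) + η * (if k = p.2 then 1 else 0))
      * (γ * (if k' = p.2 then (1:ℝ) else 0) + η * (if k' = p.1 then 1 else 0))) := by
    intro p
    rw [Xrow_swap_guard]
    unfold Xrow
    by_cases h : p.1 = p.2 <;> simp [h, eq_comm]
  rw [Finset.sum_congr rfl fun p _ => hrw p]
  rw [sum_offdiag (fun a b =>
        (γ * (if k = a then (1:ℝ) else 0) + η * (if k = b then 1 else 0))
      * (γ * (if k' = b then (1:ℝ) else 0) + η * (if k' = a then 1 else 0)))]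
  by_cases hkk : k = k'
  · subst hkk
    simp only [mul_ite, ite_mul, mul_zero, zero_mul, mul_one, one_mul, mul_add, add_mul,
      Finset.sum_add_distrib, Finset.sum_ite_eq, Finset.sum_ite_eq', Finset.mem_univ, if_true,
      Finset.sum_ite_irrel, Finset.sum_const_zero, Finset.sum_const, Finset.card_univ,
      Fintype.card_fin, nsmul_eq_mul, smul_eq_mul, if_pos]
    ring
  · simp only [mul_ite, ite_mul, mul_zero, zero_mul, mul_one, one_mul, mul_add, add_mul,
      Finset.sum_add_distrib, Finset.sum_ite_eq, Finset.sum_ite_eq', Finset.mem_univ, if_true,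
      Finset.sum_ite_irrel, Finset.sum_const_zero, Finset.sum_const, Finset.card_univ,
      Fintype.card_fin, nsmul_eq_mul, smul_eq_mul, hkk, Ne.symm hkk, if_false]
    ring

lemma Xrow_nonneg {n : ℕ} {γ η : ℝ} (hγ : 0 ≤ γ) (hη : 0 ≤ η) (p : Fin n × Fin n) (m : Fin n) :
    0 ≤ Xrow γ η p m := by
  unfold Xrow
  split
  · exact le_refl 0
  · positivity

lemma buildState (dC : ℕ) (J : Type) [Fintype J]
    (p q r t : ℝ) (A B : J → Fin dC → ℝ)
    (hp : 0 < p) (hq : 0 < q) (hpq : p + q = 1)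
    (hr : r = t * Real.sqrt (p * q))
    (hA0 : ∀ j k, 0 ≤ A j k) (hB0 : ∀ j k, 0 ≤ B j k)
    (hnorm : ∑ j, ∑ k, (A j k)^2 = 1)
    (hGram : ∀ k k', ∑ j, A j k * A j k' = ∑ j, B j k * B j k')
    (hCross : ∀ k k', ∑ j, A j k * B j k' = t * ∑ j, A j k * A j k')
    (hrowN : ∀ j, ∑ k, (B j k)^2 = ∑ k, (A j k)^2)
    (hrowC : ∀ j, ∑ k, A j k * B j k = t * ∑ k, (A j k)^2)
    (ρ : Matrix (Fin 2) (Fin 2) ℂ)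
    (h00 : ρ 0 0 = (p : ℂ)) (h01 : ρ 0 1 = (r : ℂ))
    (h10 : ρ 1 0 = (r : ℂ)) (h11 : ρ 1 1 = (q : ℂ)) :
    ∃ (dB : ℕ) (ψ : Fin 2 × Fin dB × Fin dC → ℂ),
      Normalized ψ ∧ NonNeg ψ ∧
      rhoA ψ = ρ ∧
      rhoAC ψ = rhoA ψ ⊗ₖ rhoC ψ ∧
      ∀ j : Fin dB, 0 < probB ψ j → rhoAPost ψ j = rhoA ψ := by
  set dB := Fintype.card J with hdB
  set e : Fin dB ≃ J := (Fintype.equivFin J).symm with he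
  set F : Fin 2 → J → Fin dC → ℝ :=
    fun i j k => if i = 0 then Real.sqrt p * A j k else Real.sqrt q * B j k with hF
  set ψ : Fin 2 × Fin dB × Fin dC → ℂ := fun x => ((F x.1 (e x.2.1) x.2.2 : ℝ) : ℂ) with hψ
  have hpq' : Real.sqrt p * Real.sqrt q = Real.sqrt (p * q) := (Real.sqrt_mul hp.le q).symm
  have hsp : Real.sqrt p * Real.sqrt p = p := Real.mul_self_sqrt hp.le
  have hsq : Real.sqrt q * Real.sqrt q = q := Real.mul_self_sqrt hq.le
  have hBnorm : ∑ j, ∑ k, (B j k)^2 = 1 := by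
    rw [Finset.sum_congr rfl (fun j _ => hrowN j)]; exact hnorm
  have hABsum : ∑ j, ∑ k, A j k * B j k = t := by
    rw [Finset.sum_congr rfl (fun j _ => hrowC j), ← Finset.mul_sum, hnorm, mul_one]
  have cast_sum2 : ∀ (f : J → Fin dC → ℝ), ((∑ j : J, ∑ k, f j k : ℝ) : ℂ)
      = ∑ j : Fin dB, ∑ k, ((f (e j) k : ℝ) : ℂ) := by
    intro f
    push_cast
    rw [← Equiv.sum_comp e (fun j => ∑ k : Fin dC, ((f j k : ℝ) : ℂ))]
  have cast_sum1 : ∀ (f : J → ℝ), ((∑ j : J, f j : ℝ) : ℂ)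
      = ∑ j : Fin dB, ((f (e j) : ℝ) : ℂ) := by
    intro f
    push_cast
    rw [← Equiv.sum_comp e (fun j => ((f j : ℝ) : ℂ))]
  -- the key entrywise description of rhoA
  have key : ∀ i i' : Fin 2, rhoA ψ i i'
      = ((∑ j : J, ∑ k, F i j k * F i' j k : ℝ) : ℂ) := by
    intro i i'
    show (∑ j : Fin dB, ∑ k : Fin dC, ψ (i, j, k) * (starRingEnd ℂ) (ψ (i', j, k))) = _
    rw [cast_sum2]
    refine Finset.sum_congr rfl fun j _ => Finset.sum_congr rfl fun k _ => ?_
    show (↑(F i (e j) k) : ℂ) * (starRingEnd ℂ) (↑(F i' (e j) k) : ℂ) = _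
    rw [Complex.conj_ofReal, ← Complex.ofReal_mul]
  -- values of the four entries
  have S00 : ∑ j : J, ∑ k, F 0 j k * F 0 j k = p := by
    have h : ∀ j : J, ∑ k, F 0 j k * F 0 j k = p * ∑ k, (A j k)^2 := by
      intro j
      rw [Finset.mul_sum]
      exact Finset.sum_congr rfl fun k _ => by simp only [hF, if_pos rfl]; linear_combination (A j k * A j k) * hsp
    rw [Finset.sum_congr rfl (fun j _ => h j), ← Finset.mul_sum, hnorm, mul_one]
  have S11 : ∑ j : J, ∑ k, F 1 j k * F 1 j k = q := by
    have h : ∀ j : J, ∑ k, F 1 j k * F 1 j k = q * ∑ k, (B j k)^2 := by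
      intro j
      rw [Finset.mul_sum]
      refine Finset.sum_congr rfl fun k _ => ?_
      simp only [hF, if_neg (by decide : (1 : Fin 2) ≠ 0)]
      linear_combination (B j k * B j k) * hsq
    rw [Finset.sum_congr rfl (fun j _ => h j), ← Finset.mul_sum, hBnorm, mul_one]
  have S01 : ∑ j : J, ∑ k, F 0 j k * F 1 j k = r := by
    have h : ∀ j : J, ∑ k, F 0 j k * F 1 j k = Real.sqrt (p*q) * ∑ k, A j k * B j k := by
      intro j
      rw [Finset.mul_sum]
      refine Finset.sum_congr rfl fun k _ => ?_
      simp only [hF, if_pos rfl, if_neg (by decide : (1 : Fin 2) ≠ 0)]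
      rw [← hpq']; ring
    rw [Finset.sum_congr rfl (fun j _ => h j), ← Finset.mul_sum, hABsum, hr]; ring
  have S10 : ∑ j : J, ∑ k, F 1 j k * F 0 j k = r := by
    rw [← S01]
    exact Finset.sum_congr rfl fun j _ => Finset.sum_congr rfl fun k _ => mul_comm _ _
  have hρA : rhoA ψ = ρ := by
    ext i i'
    fin_cases i <;> fin_cases i'
    · show rhoA ψ 0 0 = ρ 0 0
      rw [key 0 0, S00, h00]
    · show rhoA ψ 0 1 = ρ 0 1
      rw [key 0 1, S01, h01]
    · show rhoA ψ 1 0 = ρ 1 0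
      rw [key 1 0, S10, h10]
    · show rhoA ψ 1 1 = ρ 1 1
      rw [key 1 1, S11, h11]
  -- Gram matrix on C
  set G : Fin dC → Fin dC → ℝ := fun k k' => ∑ j : J, A j k * A j k' with hG
  have hC : ∀ k k', rhoC ψ k k' = ((G k k' : ℝ) : ℂ) := by
    intro k k'
    show (∑ i : Fin 2, ∑ j : Fin dB, ψ (i, j, k) * (starRingEnd ℂ) (ψ (i, j, k'))) = _
    have hterm : ∀ i : Fin 2, (∑ j : Fin dB, ψ (i, j, k) * (starRingEnd ℂ) (ψ (i, j, k')))
        = ((∑ j : J, F i j k * F i j k' : ℝ) : ℂ) := by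
      intro i
      rw [cast_sum1 (fun j => F i j k * F i j k')]
      refine Finset.sum_congr rfl fun j _ => ?_
      show (↑(F i (e j) k) : ℂ) * (starRingEnd ℂ) (↑(F i (e j) k') : ℂ) = _
      rw [Complex.conj_ofReal, ← Complex.ofReal_mul]
    rw [Fin.sum_univ_two, hterm 0, hterm 1]
    have e0 : ∑ j : J, F 0 j k * F 0 j k' = p * G k k' := by
      rw [hG, Finset.mul_sum]
      exact Finset.sum_congr rfl fun j _ => by simp only [hF, if_pos rfl]; linear_combination (A j k * A j k') * hsp
    have e1 : ∑ j : J, F 1 j k * F 1 j k' = q * G k k' := by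
      have : ∑ j : J, F 1 j k * F 1 j k' = q * ∑ j, B j k * B j k' := by
        rw [Finset.mul_sum]
        refine Finset.sum_congr rfl fun j _ => ?_
        simp only [hF, if_neg (by decide : (1 : Fin 2) ≠ 0)]
        linear_combination (B j k * B j k') * hsq
      rw [this, ← hGram k k']
    rw [e0, e1, ← Complex.ofReal_add]
    congr 1
    linear_combination (G k k') * hpq
  refine ⟨dB, ψ, ?_, ?_, hρA, ?_, ?_⟩
  · -- Normalized
    show (∑ i : Fin 2, ∑ j : Fin dB, ∑ k : Fin dC, Complex.normSq (ψ (i, j, k))) = 1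
    have hterm : ∀ i : Fin 2, (∑ j : Fin dB, ∑ k : Fin dC, Complex.normSq (ψ (i, j, k)))
        = ∑ j : J, ∑ k, F i j k * F i j k := by
      intro i
      rw [← Equiv.sum_comp e (fun j => ∑ k, F i j k * F i j k)]
      refine Finset.sum_congr rfl fun j _ => Finset.sum_congr rfl fun k _ => ?_
      show Complex.normSq (↑(F i (e j) k) : ℂ) = _
      rw [Complex.normSq_ofReal]
    rw [Fin.sum_univ_two, hterm 0, hterm 1, S00, S11, hpq]
  · -- NonNeg
    intro x
    refine ⟨?_, by simp [hψ]⟩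
    show 0 ≤ (((F x.1 (e x.2.1) x.2.2 : ℝ) : ℂ)).re
    rw [Complex.ofReal_re, hF]
    dsimp only
    split
    · exact mul_nonneg (Real.sqrt_nonneg _) (hA0 _ _)
    · exact mul_nonneg (Real.sqrt_nonneg _) (hB0 _ _)
  · -- rhoAC = rhoA ⊗ rhoC
    ext ⟨i, k⟩ ⟨i', k'⟩
    show (∑ j : Fin dB, ψ (i, j, k) * (starRingEnd ℂ) (ψ (i', j, k')))
      = rhoA ψ (i, k).1 (i', k').1 * rhoC ψ (i, k).2 (i', k').2
    have hterm : (∑ j : Fin dB, ψ (i, j, k) * (starRingEnd ℂ) (ψ (i', j, k')))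
        = ((∑ j : J, F i j k * F i' j k' : ℝ) : ℂ) := by
      rw [cast_sum1 (fun j => F i j k * F i' j k')]
      refine Finset.sum_congr rfl fun j _ => ?_
      show (↑(F i (e j) k) : ℂ) * (starRingEnd ℂ) (↑(F i' (e j) k') : ℂ) = _
      rw [Complex.conj_ofReal, ← Complex.ofReal_mul]
    rw [hterm, hρA, hC]
    have hGsym : G k' k = G k k' :=
      Finset.sum_congr rfl fun j _ => mul_comm _ _
    fin_cases i <;> fin_cases i'
    · show ((∑ j : J, F 0 j k * F 0 j k' : ℝ) : ℂ) = ρ 0 0 * ((G k k' : ℝ) : ℂ)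
      rw [h00]
      rw [← Complex.ofReal_mul]
      congr 1
      rw [hG, Finset.mul_sum]
      exact Finset.sum_congr rfl fun j _ => by simp only [hF, if_pos rfl]; linear_combination (A j k * A j k') * hsp
    · show ((∑ j : J, F 0 j k * F 1 j k' : ℝ) : ℂ) = ρ 0 1 * ((G k k' : ℝ) : ℂ)
      rw [h01, ← Complex.ofReal_mul]
      congr 1
      have : ∑ j : J, F 0 j k * F 1 j k' = Real.sqrt (p*q) * ∑ j, A j k * B j k' := by
        rw [Finset.mul_sum]
        refine Finset.sum_congr rfl fun j _ => ?_
        simp only [hF, if_pos rfl, if_neg (by decide : (1 : Fin 2) ≠ 0)]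
        rw [← hpq']; ring
      rw [this, hCross k k', hr, hG]; ring
    · show ((∑ j : J, F 1 j k * F 0 j k' : ℝ) : ℂ) = ρ 1 0 * ((G k k' : ℝ) : ℂ)
      rw [h10, ← Complex.ofReal_mul]
      congr 1
      have h1 : ∑ j : J, F 1 j k * F 0 j k' = Real.sqrt (p*q) * ∑ j, A j k' * B j k := by
        rw [Finset.mul_sum]
        refine Finset.sum_congr rfl fun j _ => ?_
        simp only [hF, if_pos rfl, if_neg (by decide : (1 : Fin 2) ≠ 0)]
        rw [← hpq']; ring
      have h2 : (∑ j : J, A j k' * A j k) = G k k' := hGsym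
      rw [h1, hCross k' k, hr, h2]; ring
    · show ((∑ j : J, F 1 j k * F 1 j k' : ℝ) : ℂ) = ρ 1 1 * ((G k k' : ℝ) : ℂ)
      rw [h11, ← Complex.ofReal_mul]
      congr 1
      have : ∑ j : J, F 1 j k * F 1 j k' = q * ∑ j, B j k * B j k' := by
        rw [Finset.mul_sum]
        refine Finset.sum_congr rfl fun j _ => ?_
        simp only [hF, if_neg (by decide : (1 : Fin 2) ≠ 0)]
        linear_combination (B j k * B j k') * hsq
      rw [this, ← hGram k k', hG]
  · -- post-measurement
    intro j hPj
    set N : ℝ := ∑ k, (A (e j) k)^2 with hN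
    have hprob : probB ψ j = N := by
      show (∑ i : Fin 2, ∑ k : Fin dC, Complex.normSq (ψ (i, j, k))) = N
      have hterm : ∀ i : Fin 2, (∑ k : Fin dC, Complex.normSq (ψ (i, j, k)))
          = ∑ k, F i (e j) k * F i (e j) k := by
        intro i
        refine Finset.sum_congr rfl fun k _ => ?_
        show Complex.normSq (↑(F i (e j) k) : ℂ) = _
        rw [Complex.normSq_ofReal]
      rw [Fin.sum_univ_two, hterm 0, hterm 1]
      have e0 : ∑ k, F 0 (e j) k * F 0 (e j) k = p * N := by
        rw [hN, Finset.mul_sum]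
        exact Finset.sum_congr rfl fun k _ => by simp only [hF, if_pos rfl]; linear_combination (A (e j) k * A (e j) k) * hsp
      have e1 : ∑ k, F 1 (e j) k * F 1 (e j) k = q * N := by
        have h2 : ∑ k, F 1 (e j) k * F 1 (e j) k = q * ∑ k, (B (e j) k)^2 := by
          rw [Finset.mul_sum]
          refine Finset.sum_congr rfl fun k _ => ?_
          simp only [hF, if_neg (by decide : (1 : Fin 2) ≠ 0)]
          linear_combination (B (e j) k * B (e j) k) * hsq
        rw [h2, hrowN]
      rw [e0, e1]; linear_combination N * hpq
    have hNpos : 0 < N := by rw [← hprob]; exact hPj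
    have hNne : (N : ℂ) ≠ 0 := by
      exact_mod_cast Complex.ofReal_ne_zero.2 (ne_of_gt hNpos)
    have hterm : ∀ i i' : Fin 2, (∑ k : Fin dC, ψ (i, j, k) * (starRingEnd ℂ) (ψ (i', j, k)))
        = ((∑ k, F i (e j) k * F i' (e j) k : ℝ) : ℂ) := by
      intro i i'
      rw [Complex.ofReal_sum]
      refine Finset.sum_congr rfl fun k _ => ?_
      show (↑(F i (e j) k) : ℂ) * (starRingEnd ℂ) (↑(F i' (e j) k) : ℂ) = _
      rw [Complex.conj_ofReal, ← Complex.ofReal_mul]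
    have hR00 : ∑ k, F 0 (e j) k * F 0 (e j) k = p * N := by
      rw [hN, Finset.mul_sum]
      exact Finset.sum_congr rfl fun k _ => by simp only [hF, if_pos rfl]; linear_combination (A (e j) k * A (e j) k) * hsp
    have hR11 : ∑ k, F 1 (e j) k * F 1 (e j) k = q * N := by
      have h2 : ∑ k, F 1 (e j) k * F 1 (e j) k = q * ∑ k, (B (e j) k)^2 := by
        rw [Finset.mul_sum]
        refine Finset.sum_congr rfl fun k _ => ?_
        simp only [hF, if_neg (by decide : (1 : Fin 2) ≠ 0)]
        linear_combination (B (e j) k * B (e j) k) * hsq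
      rw [h2, hrowN]
    have hR01 : ∑ k, F 0 (e j) k * F 1 (e j) k = r * N := by
      have h2 : ∑ k, F 0 (e j) k * F 1 (e j) k = Real.sqrt (p*q) * ∑ k, A (e j) k * B (e j) k := by
        rw [Finset.mul_sum]
        refine Finset.sum_congr rfl fun k _ => ?_
        simp only [hF, if_pos rfl, if_neg (by decide : (1 : Fin 2) ≠ 0)]
        rw [← hpq']; ring
      rw [h2, hrowC, ← hN, hr]; ring
    have hR10 : ∑ k, F 1 (e j) k * F 0 (e j) k = r * N := by
      rw [← hR01]
      exact Finset.sum_congr rfl fun k _ => mul_comm _ _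
    rw [hρA]
    ext i i'
    show (probB ψ j : ℂ)⁻¹ * (∑ k : Fin dC, ψ (i, j, k) * (starRingEnd ℂ) (ψ (i', j, k))) = ρ i i'
    rw [hprob, hterm i i']
    fin_cases i <;> fin_cases i'
    · show (N : ℂ)⁻¹ * ((∑ k, F 0 (e j) k * F 0 (e j) k : ℝ) : ℂ) = ρ 0 0
      rw [hR00, h00]
      push_cast
      field_simp
    · show (N : ℂ)⁻¹ * ((∑ k, F 0 (e j) k * F 1 (e j) k : ℝ) : ℂ) = ρ 0 1
      rw [hR01, h01]
      push_cast
      field_simp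
    · show (N : ℂ)⁻¹ * ((∑ k, F 1 (e j) k * F 0 (e j) k : ℝ) : ℂ) = ρ 1 0
      rw [hR10, h10]
      push_cast
      field_simp
    · show (N : ℂ)⁻¹ * ((∑ k, F 1 (e j) k * F 1 (e j) k : ℝ) : ℂ) = ρ 1 1
      rw [hR11, h11]
      push_cast
      field_simp

lemma buildAB {n : ℕ} (t : ℝ) (v w : Fin n → ℝ)
    (hv0 : ∀ k, 0 ≤ v k) (hw0 : ∀ k, 0 ≤ w k)
    (hv : ∑ k, v k ^ 2 = 1) (hw : ∑ k, w k ^ 2 = 1)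
    (hvw : ∑ k, v k * w k = t)
    (hΔ0 : 0 ≤ t * ((∑ k, v k)^2 + (∑ k, w k)^2) - 2 * (∑ k, v k) * (∑ k, w k))
    (ht0 : 0 ≤ t) (ht1 : t < 1) :
    ∃ A B : ((Equiv.Perm (Fin n) × Bool) ⊕ (Fin n × Fin n)) → Fin n → ℝ,
      (∀ j k, 0 ≤ A j k) ∧ (∀ j k, 0 ≤ B j k) ∧
      (∑ j, ∑ k, (A j k)^2) = 1 ∧
      (∀ k k', ∑ j, A j k * A j k' = ∑ j, B j k * B j k') ∧
      (∀ k k', ∑ j, A j k * B j k' = t * ∑ j, A j k * A j k') ∧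
      (∀ j, ∑ k, (B j k)^2 = ∑ k, (A j k)^2) ∧
      (∀ j, ∑ k, A j k * B j k = t * ∑ k, (A j k)^2) := by
  -- scalar setup
  have hs2 : (0:ℝ) < 1 - t^2 := by nlinarith
  set sr := Real.sqrt (1 - t^2) with hsrdef
  have hsr0 : 0 < sr := Real.sqrt_pos.2 hs2
  have hsr2 : sr^2 = 1 - t^2 := Real.sq_sqrt hs2.le
  have hsr1 : sr ≤ 1 := by nlinarith
  set γ := Real.sqrt ((1+sr)/2) with hγdef
  set η := Real.sqrt ((1-sr)/2) with hηdef
  have hγ0 : 0 ≤ γ := Real.sqrt_nonneg _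
  have hη0 : 0 ≤ η := Real.sqrt_nonneg _
  have hγ2 : γ^2 = (1+sr)/2 := Real.sq_sqrt (by linarith)
  have hη2 : η^2 = (1-sr)/2 := Real.sq_sqrt (by linarith)
  have hγη : 2*(γ*η) = t := by
    have h1 : γ*η = Real.sqrt (((1+sr)/2)*((1-sr)/2)) :=
      (Real.sqrt_mul (by linarith) _).symm
    have h2 : ((1+sr)/2)*((1-sr)/2) = (t/2)^2 := by nlinarith
    rw [h1, h2, Real.sqrt_sq (by linarith : (0:ℝ) ≤ t/2)]; ring
  have hγη1 : γ^2 + η^2 = 1 := by rw [hγ2, hη2]; ring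
  set μ := ∑ k, v k with hμdef
  set ν := ∑ k, w k with hνdef
  set D := ((n-2).factorial : ℝ) with hDdef
  have hD0 : (0:ℝ) < D := by rw [hDdef]; exact_mod_cast Nat.factorial_pos _
  set NF := (n.factorial : ℝ) with hNFdef
  have hNF0 : (0:ℝ) < NF := by rw [hNFdef]; exact_mod_cast Nat.factorial_pos _
  set Δ := t*(μ^2+ν^2) - 2*μ*ν with hΔdef
  have hΔnn : 0 ≤ Δ := by rw [hΔdef]; linarith [hΔ0]
  set w2 := D*Δ/(1-t^2) with hw2def
  have hw20 : 0 ≤ w2 := div_nonneg (mul_nonneg hD0.le hΔnn) hs2.le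
  have hnn : (0:ℝ) ≤ (n:ℝ)^2 - n := by
    have : (n:ℕ) ≤ n^2 := Nat.le_self_pow (by norm_num) n
    have h := Nat.cast_le (α := ℝ) |>.2 this
    push_cast at h
    linarith
  set den := 2*NF + ((n:ℝ)^2 - n)*w2 with hdendef
  have hden0 : 0 < den := by
    have : 0 ≤ ((n:ℝ)^2 - n)*w2 := mul_nonneg hnn hw20
    rw [hdendef]; linarith
  set a := 1/den with hadef
  have ha0 : 0 < a := by positivity
  set α := Real.sqrt a with hαdef
  set β := Real.sqrt (a*w2) with hβdef
  have hα0 : 0 ≤ α := Real.sqrt_nonneg _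
  have hβ0 : 0 ≤ β := Real.sqrt_nonneg _
  have hα2 : α^2 = a := Real.sq_sqrt ha0.le
  have hβ2 : β^2 = a*w2 := Real.sq_sqrt (mul_nonneg ha0.le hw20)
  -- auxiliary sums
  have hvv : ∑ m, v m * v m = 1 := by
    rw [← hv]; exact Finset.sum_congr rfl fun m _ => (sq (v m)).symm ▸ by ring
  have hww : ∑ m, w m * w m = 1 := by
    rw [← hw]; exact Finset.sum_congr rfl fun m _ => by ring
  have hwv : ∑ m, w m * v m = t := by
    rw [← hvw]; exact Finset.sum_congr rfl fun m _ => mul_comm _ _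
  have hperm2 : ∀ (f g : Fin n → ℝ) (π : Equiv.Perm (Fin n)),
      ∑ k, f (π k) * g (π k) = ∑ k, f k * g k :=
    fun f g π => Equiv.sum_comp π (fun m => f m * g m)
  have sumJ : ∀ F : ((Equiv.Perm (Fin n) × Bool) ⊕ (Fin n × Fin n)) → ℝ,
      ∑ j, F j = (∑ π : Equiv.Perm (Fin n), (F (Sum.inl (π, true)) + F (Sum.inl (π, false))))
        + ∑ p : Fin n × Fin n, F (Sum.inr p) := by
    intro F
    rw [Fintype.sum_sum_type]
    congr 1
    rw [Fintype.sum_prod_type]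
    exact Finset.sum_congr rfl fun π _ => by rw [Fintype.sum_bool]
  have countdiag : ∀ c : ℝ, (∑ p : Fin n × Fin n, if p.1 = p.2 then 0 else c)
      = ((n:ℝ)^2 - n) * c := by
    intro c
    rw [sum_offdiag (fun _ _ => c)]
    simp [Finset.sum_const, Finset.card_univ, Fintype.card_fin, nsmul_eq_mul]
    ring
  have e1 : ∀ π : Equiv.Perm (Fin n), ∑ k, (α * w (π k))^2 = a := by
    intro π
    have h : ∀ k, (α * w (π k))^2 = α^2 * (w (π k) * w (π k)) := fun k => by ring
    rw [Finset.sum_congr rfl fun k _ => h k, ← Finset.mul_sum, hperm2 w w π, hww, hα2, mul_one]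
  have e2 : ∀ π : Equiv.Perm (Fin n), ∑ k, (α * v (π k))^2 = a := by
    intro π
    have h : ∀ k, (α * v (π k))^2 = α^2 * (v (π k) * v (π k)) := fun k => by ring
    rw [Finset.sum_congr rfl fun k _ => h k, ← Finset.mul_sum, hperm2 v v π, hvv, hα2, mul_one]
  have e3 : ∀ p : Fin n × Fin n, ∑ k, (β * Xrow γ η p k)^2
      = β^2 * (if p.1 = p.2 then 0 else 1) := by
    intro p
    have h : ∀ k, (β * Xrow γ η p k)^2 = β^2 * (Xrow γ η p k * Xrow γ η p k) := fun k => by ring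
    rw [Finset.sum_congr rfl fun k _ => h k, ← Finset.mul_sum, rowXX, hγη1]
  have e3' : ∀ p : Fin n × Fin n, ∑ k, (β * Xrow γ η p.swap k)^2
      = β^2 * (if p.1 = p.2 then 0 else 1) := by
    intro p
    rw [e3 p.swap]
    rcases p with ⟨x, y⟩
    by_cases h : x = y
    · simp [h]
    · simp [h, Ne.symm h]
  have e4 : ∀ π : Equiv.Perm (Fin n), ∑ k, (α * w (π k)) * (α * v (π k)) = a * t := by
    intro π
    have h : ∀ k, (α * w (π k)) * (α * v (π k)) = α^2 * (w (π k) * v (π k)) := fun k => by ring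
    rw [Finset.sum_congr rfl fun k _ => h k, ← Finset.mul_sum, hperm2 w v π, hwv, hα2]
  have e5 : ∀ π : Equiv.Perm (Fin n), ∑ k, (α * v (π k)) * (α * w (π k)) = a * t := by
    intro π
    have h : ∀ k, (α * v (π k)) * (α * w (π k)) = α^2 * (v (π k) * w (π k)) := fun k => by ring
    rw [Finset.sum_congr rfl fun k _ => h k, ← Finset.mul_sum, hperm2 v w π, hvw, hα2]
  -- the rows
  refine ⟨fun j m => Sum.elim
      (fun l : Equiv.Perm (Fin n) × Bool => α * (cond l.2 (w (l.1 m)) (v (l.1 m))))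
      (fun p => β * Xrow γ η p m) j,
    fun j m => Sum.elim
      (fun l : Equiv.Perm (Fin n) × Bool => α * (cond l.2 (v (l.1 m)) (w (l.1 m))))
      (fun p => β * Xrow γ η p.swap m) j, ?_, ?_, ?_, ?_, ?_, ?_, ?_⟩
  · -- A nonneg
    rintro (⟨π, b⟩ | p) k
    · cases b <;> simp only [Sum.elim_inl, cond_true, cond_false] <;>
        exact mul_nonneg hα0 (by first | exact hv0 _ | exact hw0 _)
    · exact mul_nonneg hβ0 (Xrow_nonneg hγ0 hη0 _ _)
  · -- B nonneg
    rintro (⟨π, b⟩ | p) k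
    · cases b <;> simp only [Sum.elim_inl, cond_true, cond_false] <;>
        exact mul_nonneg hα0 (by first | exact hv0 _ | exact hw0 _)
    · exact mul_nonneg hβ0 (Xrow_nonneg hγ0 hη0 _ _)
  · -- normalization
    rw [sumJ]
    simp only [Sum.elim_inl, Sum.elim_inr, cond_true, cond_false]
    rw [Finset.sum_congr rfl (fun π _ => by rw [e1 π, e2 π]),
      Finset.sum_congr rfl (fun p _ => e3 p), ← Finset.mul_sum, countdiag 1,
      Finset.sum_const, Finset.card_univ, Fintype.card_perm, Fintype.card_fin, nsmul_eq_mul,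
      hβ2, hadef]
    have hd : den ≠ 0 := ne_of_gt hden0
    field_simp
    rw [hdendef, hNFdef]
    ring
  · -- Gram
    intro k k'
    rw [sumJ, sumJ]
    simp only [Sum.elim_inl, Sum.elim_inr, cond_true, cond_false]
    congr 1
    · exact Finset.sum_congr rfl fun π _ => by ring
    · have h := Equiv.sum_comp (Equiv.prodComm (Fin n) (Fin n))
        (fun p => (β * Xrow γ η p k) * (β * Xrow γ η p k'))
      simp only [Equiv.prodComm_apply] at h
      exact h.symm
  · -- Cross
    intro k k'
    rw [sumJ, sumJ]
    simp only [Sum.elim_inl, Sum.elim_inr, cond_true, cond_false]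
    have eL : ∑ π : Equiv.Perm (Fin n),
        ((α * w (π k)) * (α * v (π k')) + (α * v (π k)) * (α * w (π k')))
        = α^2 * (∑ π : Equiv.Perm (Fin n), w (π k) * v (π k'))
          + α^2 * (∑ π : Equiv.Perm (Fin n), v (π k) * w (π k')) := by
      rw [Finset.mul_sum, Finset.mul_sum, ← Finset.sum_add_distrib]
      exact Finset.sum_congr rfl fun π _ => by ring
    have eR : ∑ π : Equiv.Perm (Fin n),
        ((α * w (π k)) * (α * w (π k')) + (α * v (π k)) * (α * v (π k')))
        = α^2 * (∑ π : Equiv.Perm (Fin n), w (π k) * w (π k'))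
          + α^2 * (∑ π : Equiv.Perm (Fin n), v (π k) * v (π k')) := by
      rw [Finset.mul_sum, Finset.mul_sum, ← Finset.sum_add_distrib]
      exact Finset.sum_congr rfl fun π _ => by ring
    have eXY : ∑ p : Fin n × Fin n, (β * Xrow γ η p k) * (β * Xrow γ η p.swap k')
        = β^2 * ∑ p : Fin n × Fin n, Xrow γ η p k * Xrow γ η p.swap k' := by
      rw [Finset.mul_sum]
      exact Finset.sum_congr rfl fun p _ => by ring
    have eXX : ∑ p : Fin n × Fin n, (β * Xrow γ η p k) * (β * Xrow γ η p k')
        = β^2 * ∑ p : Fin n × Fin n, Xrow γ η p k * Xrow γ η p k' := by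
      rw [Finset.mul_sum]
      exact Finset.sum_congr rfl fun p _ => by ring
    rw [eL, eR, eXY, eXX, gXX, gXY]
    by_cases hkk : k = k'
    · subst hkk
      rw [perm_sum_diag w v k, perm_sum_diag v w k, perm_sum_diag w w k, perm_sum_diag v v k,
        if_pos rfl, if_pos rfl, hwv, hvw, hww, hvv, hγη, hγη1]
      ring
    · rw [perm_sum_offdiag w v hkk, perm_sum_offdiag v w hkk, perm_sum_offdiag w w hkk,
        perm_sum_offdiag v v hkk, if_neg hkk, if_neg hkk, hwv, hvw, hww, hvv, hγη, hγη1]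
      have hkey : β^2*(1-t^2) = a*(D*Δ) := by
        rw [hβ2, hw2def]
        field_simp
      rw [hΔdef] at hkey
      rw [hα2]
      linear_combination hkey
  · -- row norms
    rintro (⟨π, b⟩ | p)
    · cases b <;> simp only [Sum.elim_inl, cond_true, cond_false] <;> rw [e1 π, e2 π]
    · simp only [Sum.elim_inr]
      rw [e3 p, e3' p]
  · -- row cross
    rintro (⟨π, b⟩ | p)
    · cases b <;> simp only [Sum.elim_inl, cond_true, cond_false]
      · have h : ∑ k, (α * v (π k)) * (α * w (π k)) = a * t := e5 π
        rw [e2 π, h]; ring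
      · have h : ∑ k, (α * w (π k)) * (α * v (π k)) = a * t := e4 π
        rw [e1 π, h]; ring
    · simp only [Sum.elim_inr]
      have h1 : ∑ k, (β * Xrow γ η p k) * (β * Xrow γ η p.swap k)
          = β^2 * (if p.1 = p.2 then 0 else 2*(γ*η)) := by
        rw [← rowXY γ η p, Finset.mul_sum]
        exact (Finset.sum_congr rfl fun k _ => by ring).symm
      rw [h1, e3 p, hγη]
      by_cases h : p.1 = p.2 <;> simp [h] <;> ring

theorem stmt5 (dC : ℕ) (ρ : Matrix (Fin 2) (Fin 2) ℂ)
    (hpsd : ρ.PosSemidef) (htr : ρ.trace = 1)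
    (hentries : ∀ i j, 0 ≤ (ρ i j).re ∧ (ρ i j).im = 0)
    (hup : (ρ 0 0).re ≠ 0) (hdown : (ρ 1 1).re ≠ 0)
    (hfeas : Feasible dC ((ρ 0 1).re / Real.sqrt ((ρ 0 0).re * (ρ 1 1).re))) :
    ∃ (dB : ℕ) (ψ : Fin 2 × Fin dB × Fin dC → ℂ),
      Normalized ψ ∧ NonNeg ψ ∧
      rhoA ψ = ρ ∧
      rhoAC ψ = rhoA ψ ⊗ₖ rhoC ψ ∧
      ∀ j : Fin dB, 0 < probB ψ j → rhoAPost ψ j = rhoA ψ := by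
  classical
  set p := (ρ 0 0).re with hpdef
  set q := (ρ 1 1).re with hqdef
  set r := (ρ 0 1).re with hrdef
  set t := r / Real.sqrt (p * q) with htdef
  have hp : 0 < p := lt_of_le_of_ne (hentries 0 0).1 (Ne.symm hup)
  have hq : 0 < q := lt_of_le_of_ne (hentries 1 1).1 (Ne.symm hdown)
  have hr0 : 0 ≤ r := (hentries 0 1).1
  have hsqrt0 : 0 < Real.sqrt (p * q) := Real.sqrt_pos.2 (mul_pos hp hq)
  have ht0 : 0 ≤ t := div_nonneg hr0 hsqrt0.le
  have hrt : r = t * Real.sqrt (p * q) := by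
    rw [htdef, div_mul_cancel₀ _ (ne_of_gt hsqrt0)]
  have hpq1 : p + q = 1 := by
    have h2 : ρ 0 0 + ρ 1 1 = 1 := by
      rw [← htr]
      simp [Matrix.trace, Matrix.diag, Fin.sum_univ_two]
    have h3 := congrArg Complex.re h2
    simpa using h3
  have hentry : ∀ i j, ρ i j = (((ρ i j).re : ℝ) : ℂ) := fun i j =>
    Complex.ext rfl ((hentries i j).2.trans (Complex.ofReal_im _).symm)
  have h00 : ρ 0 0 = (p : ℂ) := hentry 0 0
  have h01 : ρ 0 1 = (r : ℂ) := hentry 0 1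
  have h11 : ρ 1 1 = (q : ℂ) := hentry 1 1
  have h10 : ρ 1 0 = (r : ℂ) := by
    have hH := hpsd.1
    have h := congrFun (congrFun hH 1) 0
    have h2 : (starRingEnd ℂ) (ρ 0 1) = ρ 1 0 := h
    rw [← h2, h01, Complex.conj_ofReal]
  obtain ⟨v, w, hv0, hw0, hv, hw, hvw, hineq⟩ := hfeas
  have habsv : ∑ k, |v k| = ∑ k, v k :=
    Finset.sum_congr rfl fun k _ => abs_of_nonneg (hv0 k)
  have habsw : ∑ k, |w k| = ∑ k, w k :=
    Finset.sum_congr rfl fun k _ => abs_of_nonneg (hw0 k)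
  rw [habsv, habsw] at hineq
  have ht1 : t ≤ 1 := by
    have hcs := Finset.sum_mul_sq_le_sq_mul_sq Finset.univ v w
    rw [hv, hw, hvw] at hcs
    nlinarith [ht0, hcs]
  by_cases hteq : t = 1
  · -- pure-state case
    refine buildState dC Unit p q r t (fun _ k => v k) (fun _ k => v k)
      hp hq hpq1 hrt (fun _ k => hv0 k) (fun _ k => hv0 k) ?_ ?_ ?_ ?_ ?_ ρ h00 h01 h10 h11
    · simpa using hv
    · intro k k'; rfl
    · intro k k'
      rw [hteq, one_mul]
    · intro j; rfl
    · intro j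
      rw [hteq, one_mul]
      exact Finset.sum_congr rfl fun k _ => by rw [sq]
  · have htlt : t < 1 := lt_of_le_of_ne ht1 hteq
    obtain ⟨A, B, hA0, hB0, hnorm, hGram, hCross, hrowN, hrowC⟩ :=
      buildAB t v w hv0 hw0 hv hw hvw (by linarith [hineq]) ht0 htlt
    exact buildState dC _ p q r t A B hp hq hpq1 hrt hA0 hB0 hnorm hGram hCross hrowN hrowC
      ρ h00 h01 h10 h11
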